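/- arXiv:1102.5204 — 2 statements merged into one kernel-verified Lean document; each statement's English description precedes it below -/
import Mathlib

section
/- Let ε ∈ [0,1] be a real number, let r ≥ 2 and l₁, l₂ ≥ 1 be natural numbers. Define the bilayer density evolution sequences p₁, p₂, q₁, q₂ by p₁(0) = p₂(0) = ε, qⱼ(i) = 1 − (1 − pⱼ(i))^(r−1), p₁(i+1) = ε·(q₁(i))^(l₁−1)·(q₂(i))^(l₂), p₂(i+1) = ε·(q₁(i))^(l₁)·(q₂(i))^(l₂−1); and define the single-layer density evolution sequence p by p(0) = ε and p(i+1) = ε·(1 − (1 − p(i))^(r−1))^(l₁+l₂−1). Then p₁(i) = p(i) for every i ≥ 0. -/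
/-- The bilayer density evolution sequence `p₁` coincides with the single-layer
density evolution sequence `p` of the `{l₁+l₂, r, L, w}` ensemble. -/
theorem bilayer_de_eq_single_layer (ε : ℝ) (hε : ε ∈ Set.Icc (0 : ℝ) 1)
    (r l₁ l₂ : ℕ) (hr : 2 ≤ r) (hl₁ : 1 ≤ l₁) (hl₂ : 1 ≤ l₂)
    (p₁ p₂ q₁ q₂ p : ℕ → ℝ)
    (hp₁0 : p₁ 0 = ε) (hp₂0 : p₂ 0 = ε)
    (hq₁ : ∀ i, q₁ i = 1 - (1 - p₁ i) ^ (r - 1))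
    (hq₂ : ∀ i, q₂ i = 1 - (1 - p₂ i) ^ (r - 1))
    (hp₁ : ∀ i, p₁ (i + 1) = ε * (q₁ i) ^ (l₁ - 1) * (q₂ i) ^ l₂)
    (hp₂ : ∀ i, p₂ (i + 1) = ε * (q₁ i) ^ l₁ * (q₂ i) ^ (l₂ - 1))
    (hp0 : p 0 = ε)
    (hp : ∀ i, p (i + 1) = ε * (1 - (1 - p i) ^ (r - 1)) ^ (l₁ + l₂ - 1)) :
    ∀ i, p₁ i = p i := by
  have key : ∀ i, p₁ i = p i ∧ p₂ i = p i := by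
    intro i
    induction i with
    | zero => exact ⟨by rw [hp₁0, hp0], by rw [hp₂0, hp0]⟩
    | succ n ih =>
      obtain ⟨h1, h2⟩ := ih
      have hq1 : q₁ n = 1 - (1 - p n) ^ (r - 1) := by rw [hq₁, h1]
      have hq2 : q₂ n = 1 - (1 - p n) ^ (r - 1) := by rw [hq₂, h2]
      have e1 : l₁ - 1 + l₂ = l₁ + l₂ - 1 := by omega
      have e2 : l₁ + (l₂ - 1) = l₁ + l₂ - 1 := by omega
      constructor
      · rw [hp₁, hp, hq1, hq2, mul_assoc, ← pow_add, e1]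
      · rw [hp₂, hp, hq1, hq2, mul_assoc, ← pow_add, e2]
  exact fun i => (key i).1
end

section
/- Let ε ∈ [0,1] be a real number, let r ≥ 2 and l₁, l₂ ≥ 1 be natural numbers. Let p₁ be the bilayer density evolution sequence defined by p₁(0) = p₂(0) = ε, qⱼ(i) = 1 − (1 − pⱼ(i))^(r−1), p₁(i+1) = ε·(q₁(i))^(l₁−1)·(q₂(i))^(l₂), p₂(i+1) = ε·(q₁(i))^(l₁)·(q₂(i))^(l₂−1), and let p be the single-layer sequence defined by p(0) = ε and p(i+1) = ε·(1 − (1 − p(i))^(r−1))^(l₁+l₂−1). Then p₁(i) tends to 0 as i → ∞ if and only if p(i) tends to 0 as i → ∞. -/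
/-- The bilayer density evolution sequence `p₁` converges to `0` iff the
single-layer density evolution sequence `p` of the `{l₁+l₂, r, L, w}` ensemble
converges to `0`; hence the two ensembles have the same BP threshold. -/
theorem bilayer_de_tendsto_zero_iff (ε : ℝ) (hε : ε ∈ Set.Icc (0 : ℝ) 1)
    (r l₁ l₂ : ℕ) (hr : 2 ≤ r) (hl₁ : 1 ≤ l₁) (hl₂ : 1 ≤ l₂)
    (p₁ p₂ q₁ q₂ p : ℕ → ℝ)
    (hp₁0 : p₁ 0 = ε) (hp₂0 : p₂ 0 = ε)
    (hq₁ : ∀ i, q₁ i = 1 - (1 - p₁ i) ^ (r - 1))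
    (hq₂ : ∀ i, q₂ i = 1 - (1 - p₂ i) ^ (r - 1))
    (hp₁ : ∀ i, p₁ (i + 1) = ε * (q₁ i) ^ (l₁ - 1) * (q₂ i) ^ l₂)
    (hp₂ : ∀ i, p₂ (i + 1) = ε * (q₁ i) ^ l₁ * (q₂ i) ^ (l₂ - 1))
    (hp0 : p 0 = ε)
    (hp : ∀ i, p (i + 1) = ε * (1 - (1 - p i) ^ (r - 1)) ^ (l₁ + l₂ - 1)) :
    Filter.Tendsto p₁ Filter.atTop (nhds 0) ↔
      Filter.Tendsto p Filter.atTop (nhds 0) := by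
  have key : ∀ i, p₁ i = p i ∧ p₂ i = p i := by
    intro i
    induction i with
    | zero => exact ⟨hp₁0.trans hp0.symm, hp₂0.trans hp0.symm⟩
    | succ n ih =>
      obtain ⟨h1, h2⟩ := ih
      have hq1 : q₁ n = 1 - (1 - p n) ^ (r - 1) := by rw [hq₁, h1]
      have hq2 : q₂ n = 1 - (1 - p n) ^ (r - 1) := by rw [hq₂, h2]
      constructor
      · rw [hp₁, hp, hq1, hq2, mul_assoc, ← pow_add]
        congr 2
        omega
      · rw [hp₂, hp, hq1, hq2, mul_assoc, ← pow_add]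
        congr 2
        omega
  have heq : p₁ = p := funext fun i => (key i).1
  rw [heq]
end
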